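/- For the dihedral group D_{2n} of order 2n with n odd, D(D_{2n}) = σ(n) + 2n; consequently D_{2n} is Leinster/quasi-Leinster/almost Leinster if and only if n is perfect/quasi-perfect/almost perfect respectively. -/

import Mathlib

open Finset DihedralGroup

section AuxCyclic

lemma aux_subgroup_eq_of_card_eq {α : Type*} [Group α] [Fintype α] [DecidableEq α] [IsCyclic α]
    {H K : Subgroup α} (h : Nat.card H = Nat.card K) : H = K := by
  classical
  have key : ∀ J : Subgroup α, (J : Set α).toFinset =
      ({a : α | a ^ (Nat.card J) = 1} : Finset α) := by
    intro J
    have hpos : 0 < Nat.card J := Nat.card_pos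
    apply Finset.eq_of_subset_of_card_le
    · intro x hx
      simp only [Set.mem_toFinset, SetLike.mem_coe] at hx
      have h1 : (⟨x, hx⟩ : J) ^ (Nat.card J) = 1 := pow_card_eq_one'
      have h2 : x ^ (Nat.card J) = 1 := by
        have h3 := congrArg (Subtype.val) h1
        rwa [SubmonoidClass.coe_pow, OneMemClass.coe_one] at h3
      simp only [mem_filter, mem_univ, true_and, Set.mem_setOf_eq]
      exact h2
    · calc ({a : α | a ^ (Nat.card J) = 1} : Finset α).card ≤ Nat.card J :=
            IsCyclic.card_pow_eq_one_le hpos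
        _ = (J : Set α).toFinset.card := by
            show Nat.card (J : Set α) = _
            rw [Nat.card_eq_card_toFinset]
  have h2 := key H
  rw [h, ← key K] at h2
  exact SetLike.coe_injective (by simpa using congrArg (fun s : Finset α => (s : Set α)) h2)

lemma aux_exists_subgroup_card {α : Type*} [Group α] [Fintype α] [IsCyclic α]
    {d : ℕ} (hd : d ∣ Nat.card α) : ∃ H : Subgroup α, Nat.card H = d := by
  obtain ⟨g, hg⟩ := IsCyclic.exists_generator (α := α)
  refine ⟨Subgroup.zpowers (g ^ (Nat.card α / d)), ?_⟩
  have hcard : orderOf g = Nat.card α := orderOf_eq_card_of_forall_mem_zpowers hg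
  have hn0 : Nat.card α ≠ 0 := Nat.card_pos.ne'
  have hd0 : d ≠ 0 := by rintro rfl; exact hn0 (Nat.eq_zero_of_zero_dvd hd)
  rw [Nat.card_zpowers, orderOf_pow, hcard, Nat.gcd_eq_right (Nat.div_dvd_of_dvd hd),
    Nat.div_div_self hd hn0]

lemma aux_sum_card_subgroups {α : Type*} [Group α] [Fintype α] [DecidableEq α] [IsCyclic α] :
    ∑ᶠ H : Subgroup α, Nat.card H = ArithmeticFunction.sigma 1 (Nat.card α) := by
  letI : Fintype (Subgroup α) := Fintype.ofFinite _
  rw [finsum_eq_sum_of_fintype, ArithmeticFunction.sigma_one_apply]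
  refine Finset.sum_bij (fun H _ => Nat.card H) ?_ ?_ ?_ ?_
  · intro H _
    exact Nat.mem_divisors.2 ⟨Subgroup.card_subgroup_dvd_card H, Nat.card_pos.ne'⟩
  · intro H _ K _ h
    exact aux_subgroup_eq_of_card_eq h
  · intro d hd
    obtain ⟨H, hH⟩ := aux_exists_subgroup_card (Nat.mem_divisors.1 hd).1
    exact ⟨H, Finset.mem_univ _, hH⟩
  · intro H _; rfl

end AuxCyclic

section AuxDihedral

/-- The rotation embedding. -/
def rotHom (n : ℕ) : Multiplicative (ZMod n) →* DihedralGroup n where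
  toFun i := r i.toAdd
  map_one' := rfl
  map_mul' x y := by
    show r (x.toAdd + y.toAdd) = r x.toAdd * r y.toAdd
    rw [r_mul_r]

lemma rotHom_injective (n : ℕ) : Function.Injective (rotHom n) := by
  intro x y h
  have h' : r x.toAdd = r y.toAdd := h
  simp only [r.injEq] at h'
  exact h'

lemma aux_two_invertible {n : ℕ} (hodd : Odd n) : ∃ u : ZMod n, 2 * u = 1 := by
  refine ⟨((n + 1) / 2 : ℕ), ?_⟩
  have h2 : 2 * ((n + 1) / 2) = n + 1 := by
    obtain ⟨k, hk⟩ := hodd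
    omega
  calc (2 : ZMod n) * ((n + 1) / 2 : ℕ) = ((2 * ((n + 1) / 2) : ℕ) : ZMod n) := by push_cast; ring
    _ = ((n + 1 : ℕ) : ZMod n) := by rw [h2]
    _ = 1 := by push_cast [ZMod.natCast_self]; ring

lemma dih_normal_iff {n : ℕ} (hodd : Odd n) (N : Subgroup (DihedralGroup n)) :
    N.Normal ↔ N = ⊤ ∨ N ∈ Set.range (fun H : Subgroup (Multiplicative (ZMod n)) =>
      Subgroup.map (rotHom n) H) := by
  constructor
  · intro hN
    by_cases hsr : ∃ i, sr i ∈ N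
    · left
      obtain ⟨i, hi⟩ := hsr
      obtain ⟨u, hu⟩ := aux_two_invertible hodd
      have hsr' : ∀ k : ZMod n, sr k ∈ N := by
        intro k
        have hc := hN.conj_mem _ hi (r ((i - k) * u))
        have he : r ((i - k) * u) * sr i * (r ((i - k) * u))⁻¹ = sr k := by
          show r ((i - k) * u) * sr i * r (-((i - k) * u)) = sr k
          rw [r_mul_sr, sr_mul_r]
          congr 1
          linear_combination (k - i) * hu
        rwa [he] at hc
      rw [Subgroup.eq_top_iff']
      rintro (k | k)
      · have := N.mul_mem (hsr' 0) (hsr' k)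
        rwa [sr_mul_sr, sub_zero] at this
      · exact hsr' k
    · right
      refine ⟨Subgroup.comap (rotHom n) N, Subgroup.map_comap_eq_self ?_⟩
      rintro (k | k) hk
      · exact ⟨Multiplicative.ofAdd k, rfl⟩
      · exact absurd ⟨k, hk⟩ hsr
  · rintro (rfl | ⟨H, rfl⟩)
    · infer_instance
    · constructor
      rintro x ⟨h, hh, rfl⟩ g
      show g * rotHom n h * g⁻¹ ∈ _
      obtain (j | j) := g
      · refine ⟨h, hh, ?_⟩
        show r h.toAdd = r j * r h.toAdd * r (-j)
        rw [r_mul_r, r_mul_r]; ring_nf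
      · refine ⟨h⁻¹, H.inv_mem hh, ?_⟩
        show r (h⁻¹).toAdd = sr j * r h.toAdd * sr j
        rw [sr_mul_r, sr_mul_sr]
        congr 1
        show -h.toAdd = j - (j + h.toAdd)
        ring

end AuxDihedral

/-- Sum of the orders of all normal subgroups of `G`. -/
noncomputable def D (G : Type*) [Group G] : ℕ :=
  ∑ᶠ N ∈ {N : Subgroup G | N.Normal}, Nat.card N

theorem D_dihedral_odd (n : ℕ) (hn : 0 < n) (hodd : Odd n) :
    D (DihedralGroup n) = ArithmeticFunction.sigma 1 n + 2 * n ∧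
    (D (DihedralGroup n) = 2 * (2 * n) ↔ ArithmeticFunction.sigma 1 n = 2 * n) ∧
    (D (DihedralGroup n) = 2 * (2 * n) + 1 ↔ ArithmeticFunction.sigma 1 n = 2 * n + 1) ∧
    (D (DihedralGroup n) = 2 * (2 * n) - 1 ↔ ArithmeticFunction.sigma 1 n = 2 * n - 1) := by
  haveI : NeZero n := ⟨hn.ne'⟩
  have hinj : Function.Injective (fun H : Subgroup (Multiplicative (ZMod n)) =>
      Subgroup.map (rotHom n) H) := Subgroup.map_injective (rotHom_injective n)
  have htop : (⊤ : Subgroup (DihedralGroup n)) ∉ Set.range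
      (fun H : Subgroup (Multiplicative (ZMod n)) => Subgroup.map (rotHom n) H) := by
    rintro ⟨H, hH⟩
    have hmem : sr 0 ∈ Subgroup.map (rotHom n) H := by simp only at hH; rw [hH]; trivial
    obtain ⟨h, _, heq⟩ := hmem
    simp [rotHom] at heq
  have hset : {N : Subgroup (DihedralGroup n) | N.Normal} =
      insert ⊤ (Set.range (fun H : Subgroup (Multiplicative (ZMod n)) =>
        Subgroup.map (rotHom n) H)) := by
    ext N
    simp only [Set.mem_setOf_eq, Set.mem_insert_iff, dih_normal_iff hodd]
  have hD : D (DihedralGroup n) = ArithmeticFunction.sigma 1 n + 2 * n := by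
    rw [D, hset, finsum_mem_insert _ htop (Set.finite_range _), finsum_mem_range hinj]
    have h1 : Nat.card (⊤ : Subgroup (DihedralGroup n)) = 2 * n := by
      rw [Subgroup.card_top]; exact DihedralGroup.nat_card
    have h2 : ∀ H : Subgroup (Multiplicative (ZMod n)),
        Nat.card (Subgroup.map (rotHom n) H) = Nat.card H := fun H =>
      (Nat.card_congr (H.equivMapOfInjective _ (rotHom_injective n)).toEquiv).symm
    simp only [h1, h2]
    rw [aux_sum_card_subgroups]
    have hcard : Nat.card (Multiplicative (ZMod n)) = n := by
      simp [Nat.card_eq_fintype_card, ZMod.card]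
    rw [hcard, add_comm]
  refine ⟨hD, ?_, ?_, ?_⟩ <;> rw [hD] <;> constructor <;> intro h <;> omega
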